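/- (Low-rank residual factorization for ILRSI/RADI-type approximations) For any $Z \in \mathbb{C}^{n \times r}$ and invertible Hermitian $Y \in \mathbb{C}^{r \times r}$, the CARE residual of $X = Z Y^{-1} Z^*$ admits the factorization $\cR(X) = \hat W \hat D \hat W^*$ with $\hat W = [A^* Z,\, M^* Z,\, C^*]$ and $\hat D = \mathrm{diag}\left(\begin{bmatrix} 0 & Y^{-1} \\ Y^{-1} & -Y^{-1} Z^* B B^* Z Y^{-1} \end{bmatrix},\, I_p\right)$, where $\cR(X) = A^* X M + M^* X A - M^* X B B^* X M + C^*C$. -/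

import Mathlib

open Matrix

/-- Low-rank factorization of the GCARE residual of `X = Z Y⁻¹ Zᴴ`. -/
theorem stmt19 {n m p r : ℕ}
    (A M : Matrix (Fin n) (Fin n) ℝ) (B : Matrix (Fin n) (Fin m) ℝ)
    (C : Matrix (Fin p) (Fin n) ℝ)
    (Z : Matrix (Fin n) (Fin r) ℂ) (Y : Matrix (Fin r) (Fin r) ℂ)
    (hY : Y.IsHermitian) (hYu : IsUnit Y) :
    let A' := A.map Complex.ofReal
    let M' := M.map Complex.ofReal
    let B' := B.map Complex.ofReal
    let C' := C.map Complex.ofReal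
    let X := Z * Y⁻¹ * Zᴴ
    let Wh := fromCols (fromCols (A'ᴴ * Z) (M'ᴴ * Z)) C'ᴴ
    let Dh := fromBlocks
      (fromBlocks 0 Y⁻¹ Y⁻¹ (-(Y⁻¹ * Zᴴ * B' * B'ᴴ * Z * Y⁻¹))) 0 0
      (1 : Matrix (Fin p) (Fin p) ℂ)
    A'ᴴ * X * M' + M'ᴴ * X * A' - M'ᴴ * X * B' * B'ᴴ * X * M' + C'ᴴ * C'
      = Wh * Dh * Whᴴ := by
  intro A' M' B' C' X Wh Dh
  have hWh : Whᴴ = fromRows (fromRows (Zᴴ * A') (Zᴴ * M')) C' := by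
    simp [Wh, conjTranspose_fromCols_eq_fromRows_conjTranspose,
      conjTranspose_mul]
  rw [hWh]
  show _ = Wh * Dh * _
  rw [show Wh * Dh = fromCols
      (fromCols (A'ᴴ * Z) (M'ᴴ * Z) * fromBlocks 0 Y⁻¹ Y⁻¹
        (-(Y⁻¹ * Zᴴ * B' * B'ᴴ * Z * Y⁻¹))) C'ᴴ from by
    simp [Wh, Dh, fromCols_mul_fromBlocks]]
  rw [fromCols_mul_fromBlocks, fromCols_mul_fromRows,
    fromCols_mul_fromRows]
  simp only [X, Matrix.mul_zero, zero_add, add_zero,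
    Matrix.mul_neg, Matrix.neg_mul]
  simp only [neg_one_smul, Matrix.neg_mul, Matrix.add_mul, Matrix.mul_assoc]
  abel
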